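/- Let w ∈ S_n. Call z ∈ c(Λ_w) join-irreducible if z is not the all-zero tuple and whenever z = x ∨ y (coordinatewise max) with x, y ∈ c(Λ_w), then z = x or z = y. Then the set of join-irreducible elements of c(Λ_w) is exactly M_w = {b_{i,x}(w) : 1 ≤ i ≤ n, 1 ≤ x ≤ c_i(w)}. -/

import Mathlib

/-- The inversion set of `w`: pairs of positions `(i,j)` with `i < j` and `w i > w j`. -/
def Invs {n : ℕ} (w : Equiv.Perm (Fin n)) : Finset (Fin n × Fin n) :=
  Finset.univ.filter (fun p => p.1 < p.2 ∧ w p.2 < w p.1)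

/-- The length (number of inversions) of `w`. -/
def len {n : ℕ} (w : Equiv.Perm (Fin n)) : ℕ := (Invs w).card

/-- The `i`-th entry of the Lehmer code of `w`. -/
def lehmer {n : ℕ} (w : Equiv.Perm (Fin n)) (i : Fin n) : ℕ :=
  ((Invs w).filter (fun p => p.1 = i)).card

/-- The extended Lehmer code `m_{i,j}(w)`: the number of inversions `(i,k)` with `k < j`. -/
def mext {n : ℕ} (w : Equiv.Perm (Fin n)) (i : Fin n) (j : Fin (n + 1)) : ℕ :=
  ((Invs w).filter (fun p => p.1 = i ∧ (p.2 : ℕ) < (j : ℕ))).card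

/-- The left weak order: `v ≤_L w` iff `inv(v) ⊆ inv(w)`. -/
def leftWeak {n : ℕ} (v w : Equiv.Perm (Fin n)) : Prop := Invs v ⊆ Invs w

/-- The value of `w` extended to `Fin (n+1)` by fixing the last point
(the `1`-indexed convention `w(n+1) = n+1` becomes `wval w n = n` here). -/
def wval {n : ℕ} (w : Equiv.Perm (Fin n)) (j : Fin (n + 1)) : ℕ :=
  if h : (j : ℕ) < n then (w ⟨j, h⟩ : ℕ) else n

/-- The set of non-inversions of `w`: pairs `(i,j)` with `i ≤ j ≤ n+1` and `w i ≤ w j`,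
where `w` is extended by fixing the last point. -/
def Ninvs {n : ℕ} (w : Equiv.Perm (Fin n)) : Finset (Fin n × Fin (n + 1)) :=
  Finset.univ.filter (fun p => (p.1 : ℕ) ≤ (p.2 : ℕ) ∧ (w p.1 : ℕ) ≤ wval w p.2)

/-- The set of Lehmer codes of elements of the weak order interval `Λ_w = [id, w]`. -/
def codeSet {n : ℕ} (w : Equiv.Perm (Fin n)) : Set (Fin n → ℕ) :=
  {x | ∃ v : Equiv.Perm (Fin n), leftWeak v w ∧ lehmer v = x}

/-- The tuple `b_{i,x}(w)`: the `j`-th coordinate is `0` if `j < i` or `(i,j) ∈ inv(w)`,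
and is `max {0, x - m_{i,j}(w)}` (truncated subtraction) if `j ≥ i` and `(i,j) ∈ ninv(w)`. -/
def bmin {n : ℕ} (w : Equiv.Perm (Fin n)) (i : Fin n) (x : ℕ) : Fin n → ℕ :=
  fun j => if (i : ℕ) ≤ (j : ℕ) ∧ (w i : ℕ) ≤ (w j : ℕ) then x - mext w i j.castSucc else 0

/-- The set `M_w` of all `b_{i,x}(w)` for `1 ≤ x ≤ c_i(w)`. -/
def Mset {n : ℕ} (w : Equiv.Perm (Fin n)) : Set (Fin n → ℕ) :=
  {z | ∃ (i : Fin n) (x : ℕ), 1 ≤ x ∧ x ≤ lehmer w i ∧ z = bmin w i x}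

/-- The direct sum `v × w ∈ S_{m+n}` of permutations. -/
def dsum {m n : ℕ} (v : Equiv.Perm (Fin m)) (w : Equiv.Perm (Fin n)) :
    Equiv.Perm (Fin (m + n)) :=
  finSumFinEquiv.permCongr (Equiv.sumCongr v w)


open Finset

section AuxLemmas

variable {n : ℕ}

lemma invs_mem {w : Equiv.Perm (Fin n)} {p : Fin n × Fin n} :
    p ∈ Invs w ↔ p.1 < p.2 ∧ w p.2 < w p.1 := by
  simp [Invs]

lemma lehmer_eq (w : Equiv.Perm (Fin n)) (i : Fin n) :
    lehmer w i = (univ.filter fun d => i < d ∧ w d < w i).card := by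
  unfold lehmer
  refine Finset.card_nbij' (fun p => p.2) (fun d => (i, d)) ?_ ?_ ?_ ?_
  · intro p hp
    simp only [Finset.mem_coe, mem_filter, invs_mem] at hp
    obtain ⟨⟨h1, h2⟩, h3⟩ := hp
    subst h3
    simp [h1, h2]
  · intro d hd
    simp only [Finset.mem_coe, mem_filter, mem_univ, true_and] at hd
    simp [mem_filter, invs_mem, hd.1, hd.2]
  · intro p hp
    simp only [Finset.mem_coe, mem_filter, invs_mem] at hp
    obtain ⟨-, h3⟩ := hp
    subst h3; rfl
  · intro d hd; rfl

lemma mext_eq (w : Equiv.Perm (Fin n)) (i : Fin n) (j : Fin (n + 1)) :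
    mext w i j = (univ.filter fun d => i < d ∧ w d < w i ∧ (d : ℕ) < (j : ℕ)).card := by
  unfold mext
  refine Finset.card_nbij' (fun p => p.2) (fun d => (i, d)) ?_ ?_ ?_ ?_
  · intro p hp
    simp only [Finset.mem_coe, mem_filter, invs_mem] at hp
    obtain ⟨⟨h1, h2⟩, h3, h4⟩ := hp
    subst h3
    simp [h1, h2, h4]
  · intro d hd
    simp only [Finset.mem_coe, mem_filter, mem_univ, true_and] at hd
    simp [mem_filter, invs_mem, hd.1, hd.2.1, hd.2.2]
  · intro p hp
    simp only [Finset.mem_coe, mem_filter, invs_mem] at hp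
    obtain ⟨-, h3, -⟩ := hp
    subst h3; rfl
  · intro d hd; rfl

lemma lehmer_le {v w : Equiv.Perm (Fin n)} (h : leftWeak v w) (i : Fin n) :
    lehmer v i ≤ lehmer w i :=
  Finset.card_le_card (Finset.filter_subset_filter _ h)

lemma key_ineq {v w : Equiv.Perm (Fin n)} (h : leftWeak v w) {i j : Fin n}
    (hij : i < j) (hw : w i < w j) :
    lehmer v i ≤ lehmer v j + mext w i j.castSucc := by
  have hvij : ¬ v j < v i := by
    intro hlt
    have : (i, j) ∈ Invs w := h (invs_mem.mpr ⟨hij, hlt⟩)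
    exact absurd (invs_mem.mp this).2 (not_lt.mpr hw.le)
  rw [lehmer_eq v i, lehmer_eq v j, mext_eq]
  set S := univ.filter (fun d : Fin n => i < d ∧ v d < v i) with hS
  have hsplit : (S.filter (fun d : Fin n => (d : ℕ) < (j : ℕ))).card
      + (S.filter (fun d : Fin n => ¬ (d : ℕ) < (j : ℕ))).card = S.card :=
    Finset.card_filter_add_card_filter_not _
  rw [← hsplit]
  have h1 : (S.filter (fun d : Fin n => (d : ℕ) < (j : ℕ))).card
      ≤ (univ.filter fun d => i < d ∧ w d < w i ∧ (d : ℕ) < ((j.castSucc : Fin (n+1)) : ℕ)).card := by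
    apply Finset.card_le_card
    intro d hd
    simp only [hS, mem_filter, mem_univ, true_and, Finset.filter_filter] at hd ⊢
    obtain ⟨⟨h1, h2⟩, h3⟩ := hd
    have : (i, d) ∈ Invs w := h (invs_mem.mpr ⟨h1, h2⟩)
    exact ⟨h1, (invs_mem.mp this).2, by simpa using h3⟩
  have h2 : (S.filter (fun d : Fin n => ¬ (d : ℕ) < (j : ℕ))).card
      ≤ (univ.filter fun d => j < d ∧ v d < v j).card := by
    apply Finset.card_le_card
    intro d hd
    simp only [hS, mem_filter, mem_univ, true_and, Finset.filter_filter] at hd ⊢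
    obtain ⟨⟨h1, h2⟩, h3⟩ := hd
    have hji : v i < v j := lt_of_le_of_ne (not_lt.mp hvij) (fun e => (hij.ne (v.injective e)).elim)
    have hdj : d ≠ j := by
      rintro rfl; exact absurd h2 (not_lt.mpr hji.le)
    have : j < d := lt_of_le_of_ne (by rw [Fin.le_def]; exact not_lt.mp h3) (Ne.symm hdj)
    exact ⟨this, h2.trans hji⟩
  omega

lemma bmin_le_lehmer {v w : Equiv.Perm (Fin n)} (h : leftWeak v w) (i : Fin n) {x : ℕ}
    (hx : x ≤ lehmer v i) : bmin w i x ≤ lehmer v := by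
  intro j
  unfold bmin
  split
  · next hc =>
    obtain ⟨hij, hwij⟩ := hc
    rcases eq_or_lt_of_le hij with heq | hlt
    · have : i = j := Fin.ext heq
      subst this
      exact le_trans (Nat.sub_le _ _) hx
    · have hij' : i < j := hlt
      have hwlt : w i < w j := by
        rcases lt_or_eq_of_le hwij with h' | h'
        · exact h'
        · exact absurd (w.injective (Fin.ext h')) hij'.ne
      have := key_ineq h hij' hwlt
      show x - mext w i j.castSucc ≤ lehmer v j
      omega
  · exact Nat.zero_le _

lemma descent_exists {t : Equiv.Perm (Fin n)} (ht : t ≠ 1) :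
    ∃ a b : Fin n, (b : ℕ) = (a : ℕ) + 1 ∧ t⁻¹ b < t⁻¹ a := by
  by_contra hcon
  push_neg at hcon
  apply ht
  have hsm : StrictMono (fun v : Fin n => t⁻¹ v) := by
    cases n with
    | zero => intro a; exact absurd a.2 (by omega)
    | succ m =>
      rw [Fin.strictMono_iff_lt_succ]
      intro i
      have hb : ((i.succ : Fin (m+1)) : ℕ) = ((i.castSucc : Fin (m+1)) : ℕ) + 1 := by simp
      have := hcon i.castSucc i.succ hb
      rcases lt_or_eq_of_le this with h | h
      · exact h
      · exact absurd (t⁻¹.injective h) (by simp [Fin.ext_iff])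
  have : (fun v : Fin n => t⁻¹ v) = id := by
    apply (StrictMono.range_inj hsm strictMono_id).mp
    simp [Set.range_eq_univ.mpr (t⁻¹).surjective]
  have h1 : t⁻¹ = 1 := by
    ext v
    simp [congrFun this v]
  rw [← inv_inv t, h1]; rfl

lemma cover_exists {t : Equiv.Perm (Fin n)} (ht : t ≠ 1) :
    ∃ (u : Equiv.Perm (Fin n)) (p : Fin n), Invs u ⊆ Invs t ∧ 1 ≤ lehmer t p ∧
      lehmer u = fun j => if j = p then lehmer t p - 1 else lehmer t j := by
  obtain ⟨a, b, hb, hpq⟩ := descent_exists ht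
  set p := t⁻¹ b with hp
  set q := t⁻¹ a with hq
  have htp : t p = b := by simp [hp]
  have htq : t q = a := by simp [hq]
  have hab : a ≠ b := by intro h; rw [h] at hb; omega
  have hval : ∀ c : Fin n, ((Equiv.swap a b) c : ℕ)
      = if (c : ℕ) = (a : ℕ) then (b : ℕ) else if (c : ℕ) = (b : ℕ) then (a : ℕ) else (c : ℕ) := by
    intro c
    rcases eq_or_ne c a with rfl | h1
    · simp
    · rcases eq_or_ne c b with rfl | h2
      · rw [Equiv.swap_apply_right, if_neg (Fin.val_ne_iff.mpr h1), if_pos rfl]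
      · rw [Equiv.swap_apply_of_ne_of_ne h1 h2,
          if_neg (Fin.val_ne_iff.mpr h1), if_neg (Fin.val_ne_iff.mpr h2)]
  set u := t.trans (Equiv.swap a b) with hu
  have huapp : ∀ c : Fin n, (u c : ℕ)
      = if ((t c) : ℕ) = (a : ℕ) then (b : ℕ) else if ((t c) : ℕ) = (b : ℕ) then (a : ℕ)
        else ((t c) : ℕ) := fun c => hval (t c)
  have hpqlt : p < q := hpq
  have hba : (b : ℕ) ≠ (a : ℕ) := by omega
  have hmem : ∀ r : Fin n × Fin n, r ∈ Invs u ↔ r ∈ Invs t ∧ r ≠ (p, q) := by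
    intro r
    rw [invs_mem, invs_mem]
    have e1a : t r.1 = a ↔ r.1 = q := by rw [hq]; exact Equiv.apply_eq_iff_eq_symm_apply t
    have e1b : t r.1 = b ↔ r.1 = p := by rw [hp]; exact Equiv.apply_eq_iff_eq_symm_apply t
    have e2a : t r.2 = a ↔ r.2 = q := by rw [hq]; exact Equiv.apply_eq_iff_eq_symm_apply t
    have e2b : t r.2 = b ↔ r.2 = p := by rw [hp]; exact Equiv.apply_eq_iff_eq_symm_apply t
    by_cases hlt : r.1 < r.2
    · have hne12 : t r.1 ≠ t r.2 := fun h => hlt.ne (t.injective h)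
      have main : u r.2 < u r.1 ↔ (t r.2 < t r.1 ∧ r ≠ (p, q)) := by
        rcases eq_or_ne (t r.1) a with h1a | h1a
        · rcases eq_or_ne (t r.2) b with h2b | h2b
          · exfalso
            have hq1 : r.1 = q := e1a.mp h1a
            have hp2 : r.2 = p := e2b.mp h2b
            rw [hq1, hp2] at hlt
            exact absurd hlt (not_lt.mpr hpqlt.le)
          · have hR : r ≠ (p, q) := by
              intro h
              have : r.1 = p := by rw [h]
              have : t r.1 = b := e1b.mpr this
              rw [h1a] at this
              exact hab this
            rw [and_iff_left hR, Fin.lt_def, Fin.lt_def, huapp r.1, huapp r.2]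
            have n1a := congrArg Fin.val h1a
            have n2b := Fin.val_ne_iff.mpr h2b
            have n2a : ¬ ((t r.2 : ℕ) = (a : ℕ)) :=
              Fin.val_ne_iff.mpr (fun h => hne12 (h1a.trans h.symm))
            rw [if_pos n1a, if_neg n2a, if_neg n2b]
            omega
        · rcases eq_or_ne (t r.1) b with h1b | h1b
          · rcases eq_or_ne (t r.2) a with h2a | h2a
            · have hr : r = (p, q) := Prod.ext (e1b.mp h1b) (e2a.mp h2a)
              constructor
              · intro hL
                exfalso
                rw [Fin.lt_def, huapp r.1, huapp r.2] at hL
                have n1a := Fin.val_ne_iff.mpr h1a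
                have n1b := congrArg Fin.val h1b
                have n2a := congrArg Fin.val h2a
                rw [if_neg n1a, if_pos n1b, if_pos n2a] at hL
                omega
              · rintro ⟨-, hn⟩
                exact absurd hr hn
            · have hR : r ≠ (p, q) := by
                intro h
                have : r.2 = q := by rw [h]
                have : t r.2 = a := e2a.mpr this
                exact h2a this
              rw [and_iff_left hR, Fin.lt_def, Fin.lt_def, huapp r.1, huapp r.2]
              have n1a := Fin.val_ne_iff.mpr h1a
              have n1b := congrArg Fin.val h1b
              have n2a := Fin.val_ne_iff.mpr h2a
              have n2b : ¬ ((t r.2 : ℕ) = (b : ℕ)) :=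
                Fin.val_ne_iff.mpr (fun h => hne12 (h1b.trans h.symm))
              rw [if_neg n1a, if_pos n1b, if_neg n2a, if_neg n2b]
              omega
          · have hR : r ≠ (p, q) := by
              intro h
              have : r.1 = p := by rw [h]
              exact h1b (e1b.mpr this)
            rw [and_iff_left hR, Fin.lt_def, Fin.lt_def, huapp r.1, huapp r.2]
            have n1a := Fin.val_ne_iff.mpr h1a
            have n1b := Fin.val_ne_iff.mpr h1b
            rcases eq_or_ne (t r.2) a with h2a | h2a
            · have n2a := congrArg Fin.val h2a
              rw [if_neg n1a, if_neg n1b, if_pos n2a]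
              omega
            · rcases eq_or_ne (t r.2) b with h2b | h2b
              · have n2a := Fin.val_ne_iff.mpr h2a
                have n2b := congrArg Fin.val h2b
                rw [if_neg n1a, if_neg n1b, if_neg n2a, if_pos n2b]
                omega
              · have n2a := Fin.val_ne_iff.mpr h2a
                have n2b := Fin.val_ne_iff.mpr h2b
                rw [if_neg n1a, if_neg n1b, if_neg n2a, if_neg n2b]
      constructor
      · rintro ⟨-, hL⟩
        exact ⟨⟨hlt, (main.mp hL).1⟩, (main.mp hL).2⟩
      · rintro ⟨⟨-, hT⟩, hn⟩
        exact ⟨hlt, main.mpr ⟨hT, hn⟩⟩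
    · simp [hlt]
  have hInvs : Invs u = (Invs t).erase (p, q) := by
    ext r
    rw [hmem r, Finset.mem_erase, and_comm]
  have hpq_mem : (p, q) ∈ (Invs t).filter (fun r => r.1 = p) := by
    rw [Finset.mem_filter, invs_mem]
    exact ⟨⟨hpqlt, by rw [htp, htq, Fin.lt_def]; omega⟩, rfl⟩
  refine ⟨u, p, ?_, ?_, ?_⟩
  · rw [hInvs]; exact Finset.erase_subset _ _
  · unfold lehmer
    have := Finset.card_pos.mpr ⟨(p, q), hpq_mem⟩
    omega
  · funext j
    unfold lehmer
    rw [hInvs, Finset.filter_erase]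
    by_cases hj : j = p
    · subst hj
      rw [if_pos rfl, Finset.card_erase_of_mem hpq_mem]
    · rw [if_neg hj, Finset.erase_eq_of_notMem]
      intro hc
      exact hj ((Finset.mem_filter.mp hc).2.symm ▸ rfl)

lemma bmin_mem_codeSet (w : Equiv.Perm (Fin n)) (i : Fin n) {x : ℕ}
    (hx1 : 1 ≤ x) (hx2 : x ≤ lehmer w i) :
    ∃ v : Equiv.Perm (Fin n), leftWeak v w ∧ lehmer v = bmin w i x := by
  classical
  set D := univ.filter (fun d : Fin n => i < d ∧ w d < w i) with hD
  have hDcard : D.card = lehmer w i := (lehmer_eq w i).symm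
  -- choose k, the x-th smallest element of D
  have hDne : D.Nonempty := by
    rw [← Finset.card_pos, hDcard]; omega
  set K := D.filter (fun d => x ≤ (D.filter (fun e => e ≤ d)).card) with hK
  have hKne : K.Nonempty := by
    refine ⟨D.max' hDne, ?_⟩
    rw [hK, Finset.mem_filter]
    refine ⟨D.max'_mem hDne, ?_⟩
    have : D.filter (fun e => e ≤ D.max' hDne) = D := by
      apply Finset.filter_true_of_mem
      intro e he
      exact D.le_max' e he
    rw [this, hDcard]; exact hx2
  set k := K.min' hKne with hk
  have hkK : k ∈ K := K.min'_mem hKne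
  have hkK' := hkK
  rw [hK, Finset.mem_filter] at hkK'
  obtain ⟨hkD, hkx⟩ := hkK'
  have hkD' := hkD
  rw [hD, Finset.mem_filter] at hkD'
  obtain ⟨-, hik, hwk⟩ := hkD'
  -- μ and s
  set μ : Fin n → ℕ := fun j => (D.filter (fun d => d < j)).card with hμ
  set sc : Fin n → ℕ :=
    fun j => (univ.filter (fun e : Fin n => i ≤ e ∧ e < j ∧ ¬ w e < w i)).card with hsc
  have hcardle : (D.filter (fun e => e ≤ k)).card = μ k + 1 := by
    have hset : D.filter (fun e => e ≤ k) = insert k (D.filter (fun d => d < k)) := by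
      ext e
      simp only [Finset.mem_filter, Finset.mem_insert]
      constructor
      · rintro ⟨he, hle⟩
        rcases lt_or_eq_of_le hle with h | h
        · exact Or.inr ⟨he, h⟩
        · exact Or.inl h
      · rintro (rfl | ⟨he, hlt⟩)
        · exact ⟨hkD, le_refl _⟩
        · exact ⟨he, hlt.le⟩
    rw [hset, Finset.card_insert_of_notMem (by simp)]
  have hμapp : ∀ j, μ j = (D.filter (fun d => d < j)).card := fun j => rfl
  have hscapp : ∀ j, sc j
      = (univ.filter (fun e : Fin n => i ≤ e ∧ e < j ∧ ¬ w e < w i)).card := fun j => rfl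
  have hμk : μ k ≤ x - 1 := by
    by_contra hcon
    push_neg at hcon
    have hx_le : x ≤ μ k := by omega
    have hne2 : (D.filter (fun d => d < k)).Nonempty := by
      rw [← Finset.card_pos, ← hμapp k]; omega
    set d0 := (D.filter (fun d => d < k)).max' hne2 with hd0
    have hd0mem := (D.filter (fun d => d < k)).max'_mem hne2
    have hd0D : d0 ∈ D := (Finset.mem_filter.mp hd0mem).1
    have hd0k : d0 < k := (Finset.mem_filter.mp hd0mem).2
    have hd0K : d0 ∈ K := by
      rw [hK, Finset.mem_filter]
      refine ⟨hd0D, le_trans hx_le (Finset.card_le_card ?_)⟩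
      intro e he
      rw [Finset.mem_filter] at he ⊢
      exact ⟨he.1, (D.filter (fun d => d < k)).le_max' e (Finset.mem_filter.mpr he)⟩
    exact absurd (K.min'_le d0 hd0K) (not_le.mpr hd0k)
  have hμkx : μ k = x - 1 := by omega
  have hkx' : (D.filter (fun e => e ≤ k)).card = x := by omega
  -- F4 : i + x ≤ k
  have hF4 : (i : ℕ) + x ≤ (k : ℕ) := by
    have hsub : D.filter (fun e => e ≤ k) ⊆ Finset.Ioc i k := by
      intro e he
      rw [Finset.mem_filter, hD, Finset.mem_filter] at he
      rw [Finset.mem_Ioc]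
      exact ⟨he.1.2.1, he.2⟩
    have := Finset.card_le_card hsub
    rw [hkx'] at this
    have hIoc : (Finset.Ioc i k).card = (k : ℕ) - (i : ℕ) := Fin.card_Ioc i k
    rw [Fin.lt_def] at hik
    omega
  -- F1 : μ is bounded by x-1 on the window
  have hF1 : ∀ j : Fin n, (j : ℕ) ≤ (k : ℕ) → μ j ≤ x - 1 := by
    intro j hj
    refine le_trans ?_ hμk
    rw [hμapp, hμapp]
    apply Finset.card_le_card
    intro d hd
    rw [Finset.mem_filter] at hd ⊢
    refine ⟨hd.1, ?_⟩
    rw [Fin.lt_def] at hd ⊢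
    omega
  -- F2 : partition of the interval [i, j)
  have hF2 : ∀ j : Fin n, (i : ℕ) ≤ (j : ℕ) → μ j + sc j = (j : ℕ) - (i : ℕ) := by
    intro j hij
    rw [hμapp, hscapp]
    have h1 : D.filter (fun d => d < j) = (Finset.Ico i j).filter (fun e => w e < w i) := by
      ext e
      simp only [hD, Finset.mem_filter, Finset.mem_Ico, Finset.mem_univ, true_and]
      constructor
      · rintro ⟨⟨h2, h3⟩, h4⟩
        exact ⟨⟨h2.le, h4⟩, h3⟩
      · rintro ⟨⟨h2, h3⟩, h4⟩
        have : i ≠ e := by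
          rintro rfl
          exact lt_irrefl _ h4
        exact ⟨⟨lt_of_le_of_ne h2 this, h4⟩, h3⟩
    have h2 : univ.filter (fun e : Fin n => i ≤ e ∧ e < j ∧ ¬ w e < w i)
        = (Finset.Ico i j).filter (fun e => ¬ w e < w i) := by
      ext e
      simp only [Finset.mem_filter, Finset.mem_Ico, Finset.mem_univ, true_and]
      constructor
      · rintro ⟨h2, h3, h4⟩
        exact ⟨⟨h2, h3⟩, h4⟩
      · rintro ⟨⟨h2, h3⟩, h4⟩
        exact ⟨h2, h3, h4⟩
    rw [h1, h2, Finset.card_filter_add_card_filter_not, Fin.card_Ico]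
  -- F3 : beyond k, μ is at least x
  have hF3 : ∀ j : Fin n, (k : ℕ) < (j : ℕ) → x ≤ μ j := by
    intro j hj
    refine le_trans hkx ?_
    rw [hμapp]
    apply Finset.card_le_card
    intro d hd
    rw [Finset.mem_filter] at hd ⊢
    refine ⟨hd.1, ?_⟩
    have := hd.2
    rw [Fin.le_def] at this
    rw [Fin.lt_def]
    omega
  -- F5 : key bound for the E branch
  have hF5 : ∀ j : Fin n, (i : ℕ) ≤ (j : ℕ) → (j : ℕ) ≤ (k : ℕ) → ¬ w j < w i →
      x + (j : ℕ) ≤ μ j + (k : ℕ) := by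
    intro j hij hjk hwj
    have hsplit := Finset.card_filter_add_card_filter_not
      (s := D.filter (fun e => e ≤ k)) (p := fun d => d < j)
    have e1 : (D.filter (fun e => e ≤ k)).filter (fun d => d < j)
        = D.filter (fun d => d < j) := by
      ext d
      simp only [Finset.mem_filter]
      constructor
      · rintro ⟨⟨h1, -⟩, h3⟩
        exact ⟨h1, h3⟩
      · rintro ⟨h1, h3⟩
        refine ⟨⟨h1, ?_⟩, h3⟩
        rw [Fin.le_def]
        rw [Fin.lt_def] at h3
        omega
    have e2 : (D.filter (fun e => e ≤ k)).filter (fun d => ¬ d < j) ⊆ Finset.Ioc j k := by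
      intro d hd
      simp only [hD, Finset.mem_filter, Finset.mem_univ, true_and] at hd
      obtain ⟨⟨⟨-, hdw⟩, hdk⟩, hdj⟩ := hd
      rw [Finset.mem_Ioc]
      refine ⟨?_, hdk⟩
      rcases lt_trichotomy j d with h | h | h
      · exact h
      · exact absurd (h ▸ hdw) hwj
      · exact absurd h hdj
    have hcard2 := Finset.card_le_card e2
    rw [Fin.card_Ioc] at hcard2
    rw [e1, ← hμapp, hkx'] at hsplit
    omega
  -- the function g
  set g : Fin n → ℕ := fun j =>
    if (j : ℕ) < (i : ℕ) ∨ (k : ℕ) < (j : ℕ) then (j : ℕ)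
    else if w j < w i then (i : ℕ) + μ j
    else (i : ℕ) + x + sc j with hgdef
  have hgapp : ∀ j : Fin n, g j =
      if (j : ℕ) < (i : ℕ) ∨ (k : ℕ) < (j : ℕ) then (j : ℕ)
      else if w j < w i then (i : ℕ) + μ j
      else (i : ℕ) + x + sc j := fun j => rfl
  have hkn : (k : ℕ) < n := k.isLt
  -- upper bound for the E branch
  have hEbound : ∀ j : Fin n, (i : ℕ) ≤ (j : ℕ) → (j : ℕ) ≤ (k : ℕ) → ¬ w j < w i →
      (i : ℕ) + x + sc j ≤ (k : ℕ) := by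
    intro j h1 h2 h3
    have := hF2 j h1
    have := hF5 j h1 h2 h3
    omega
  have hbound : ∀ j : Fin n, g j < n := by
    intro j
    rw [hgapp]
    split_ifs with h1 h2
    · exact j.isLt
    · push_neg at h1
      have := hF1 j h1.2
      omega
    · push_neg at h1
      have := hEbound j h1.1 h1.2 h2
      omega
  set f : Fin n → Fin n := fun j => ⟨g j, hbound j⟩ with hfdef
  have hfval : ∀ j, (f j : ℕ) = g j := fun j => rfl
  -- strict monotonicity lemmas
  have hstrictμ : ∀ j l : Fin n, j < l → (i : ℕ) < (j : ℕ) → w j < w i → μ j < μ l := by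
    intro j l hjl hij hwj
    rw [hμapp, hμapp]
    have hsub : D.filter (fun d => d < j) ⊆ D.filter (fun d => d < l) := by
      intro d hd
      rw [Finset.mem_filter] at hd ⊢
      exact ⟨hd.1, hd.2.trans hjl⟩
    refine Finset.card_lt_card ((Finset.ssubset_iff_of_subset hsub).mpr ⟨j, ?_, ?_⟩)
    · rw [Finset.mem_filter, hD, Finset.mem_filter]
      exact ⟨⟨Finset.mem_univ j, Fin.lt_def.mpr hij, hwj⟩, hjl⟩
    · rw [Finset.mem_filter]
      rintro ⟨-, hc⟩
      exact lt_irrefl _ hc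
  have hstrictsc : ∀ j l : Fin n, j < l → (i : ℕ) ≤ (j : ℕ) → ¬ w j < w i → sc j < sc l := by
    intro j l hjl hij hwj
    rw [hscapp, hscapp]
    have hsub : univ.filter (fun e : Fin n => i ≤ e ∧ e < j ∧ ¬ w e < w i)
        ⊆ univ.filter (fun e : Fin n => i ≤ e ∧ e < l ∧ ¬ w e < w i) := by
      intro d hd
      rw [Finset.mem_filter] at hd ⊢
      exact ⟨hd.1, hd.2.1, hd.2.2.1.trans hjl, hd.2.2.2⟩
    refine Finset.card_lt_card ((Finset.ssubset_iff_of_subset hsub).mpr ⟨j, ?_, ?_⟩)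
    · rw [Finset.mem_filter]
      exact ⟨Finset.mem_univ j, Fin.le_def.mpr hij, hjl, hwj⟩
    · rw [Finset.mem_filter]
      rintro ⟨-, -, hc, -⟩
      exact lt_irrefl _ hc
  -- the comparison trichotomy
  have hcmp : ∀ j l : Fin n, j < l →
      (((i : ℕ) ≤ (j : ℕ) ∧ ¬ w j < w i ∧ (l : ℕ) ≤ (k : ℕ) ∧ w l < w i) ∧ g l < g j)
      ∨ (¬((i : ℕ) ≤ (j : ℕ) ∧ ¬ w j < w i ∧ (l : ℕ) ≤ (k : ℕ) ∧ w l < w i) ∧ g j < g l) := by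
    intro j l hjl
    have hjlv : (j : ℕ) < (l : ℕ) := Fin.lt_def.mp hjl
    rw [hgapp j, hgapp l]
    by_cases c1 : (j : ℕ) < (i : ℕ) ∨ (k : ℕ) < (j : ℕ)
    · rw [if_pos c1]
      rcases c1 with c1 | c1
      · refine Or.inr ⟨fun h => by omega, ?_⟩
        by_cases c2 : (l : ℕ) < (i : ℕ) ∨ (k : ℕ) < (l : ℕ)
        · rw [if_pos c2]; omega
        · rw [if_neg c2]
          push_neg at c2
          split_ifs <;> omega
      · have c2 : (l : ℕ) < (i : ℕ) ∨ (k : ℕ) < (l : ℕ) := Or.inr (by omega)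
        rw [if_pos c2]
        exact Or.inr ⟨fun h => by omega, by omega⟩
    · rw [if_neg c1]
      push_neg at c1
      obtain ⟨hij, hjk⟩ := c1
      by_cases cw : w j < w i
      · rw [if_pos cw]
        have hμj := hF1 j hjk
        refine Or.inr ⟨fun h => h.2.1 cw, ?_⟩
        by_cases c2 : (l : ℕ) < (i : ℕ) ∨ (k : ℕ) < (l : ℕ)
        · rw [if_pos c2]; omega
        · rw [if_neg c2]
          push_neg at c2
          split_ifs with cw2
          · have hij' : (i : ℕ) < (j : ℕ) := by
              rcases lt_or_eq_of_le hij with h | h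
              · exact h
              · exfalso; exact lt_irrefl _ (Fin.ext h ▸ cw)
            have := hstrictμ j l hjl hij' cw
            omega
          · omega
      · rw [if_neg cw]
        have hgj := hEbound j hij hjk cw
        by_cases c2 : (l : ℕ) < (i : ℕ) ∨ (k : ℕ) < (l : ℕ)
        · have hlk : (k : ℕ) < (l : ℕ) := by omega
          rw [if_pos c2]
          exact Or.inr ⟨fun h => by omega, by omega⟩
        · rw [if_neg c2]
          push_neg at c2
          by_cases cw2 : w l < w i
          · rw [if_pos cw2]
            have hμl := hF1 l c2.2
            exact Or.inl ⟨⟨hij, cw, c2.2, cw2⟩, by omega⟩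
          · rw [if_neg cw2]
            have := hstrictsc j l hjl hij cw
            exact Or.inr ⟨fun h => cw2 h.2.2.2, by omega⟩
  have hinv_iff : ∀ j l : Fin n, j < l →
      ((f l : ℕ) < (f j : ℕ) ↔
        ((i : ℕ) ≤ (j : ℕ) ∧ ¬ w j < w i ∧ (l : ℕ) ≤ (k : ℕ) ∧ w l < w i)) := by
    intro j l hjl
    rw [hfval, hfval]
    rcases hcmp j l hjl with ⟨hR, hlt⟩ | ⟨hR, hlt⟩
    · exact iff_of_true hlt hR
    · exact iff_of_false (by omega) hR
  -- the permutation v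
  have hinj : Function.Injective f := by
    intro j l hexy
    have hval : g j = g l := by rw [← hfval j, ← hfval l, hexy]
    by_contra hne
    rcases lt_trichotomy j l with h | h | h
    · rcases hcmp j l h with ⟨-, hlt⟩ | ⟨-, hlt⟩ <;> omega
    · exact hne h
    · rcases hcmp l j h with ⟨-, hlt⟩ | ⟨-, hlt⟩ <;> omega
  set v : Equiv.Perm (Fin n) :=
    Equiv.ofBijective f (Finite.injective_iff_bijective.mp hinj) with hvdef
  have hvapp : ∀ j, v j = f j := fun j => rfl
  refine ⟨v, ?_, ?_⟩
  · -- Invs v ⊆ Invs w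
    intro r hr
    rw [invs_mem] at hr ⊢
    obtain ⟨h1, h2⟩ := hr
    have h2' : (f r.2 : ℕ) < (f r.1 : ℕ) := by
      rw [← hvapp, ← hvapp]
      exact Fin.lt_def.mp h2
    obtain ⟨hile, hnj, hlk, hwl⟩ := (hinv_iff r.1 r.2 h1).mp h2'
    exact ⟨h1, lt_of_lt_of_le hwl (not_lt.mp hnj)⟩
  · -- lehmer v = bmin w i x
    funext j
    rw [lehmer_eq]
    unfold bmin
    have hwcond : ((w i : ℕ) ≤ (w j : ℕ)) ↔ ¬ w j < w i := by
      rw [Fin.lt_def, not_lt]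
    by_cases hcj : (i : ℕ) ≤ (j : ℕ) ∧ ¬ w j < w i
    · rw [if_pos ⟨hcj.1, hwcond.mpr hcj.2⟩]
      have hμext : mext w i j.castSucc = μ j := by
        rw [mext_eq, hμapp]
        congr 1
        ext d
        simp only [hD, Finset.mem_filter, Finset.mem_univ, true_and, Fin.coe_castSucc]
        rw [Fin.lt_def]
        tauto
      have hseteq : (univ.filter fun d => j < d ∧ v d < v j)
          = univ.filter (fun d => j < d ∧ (d : ℕ) ≤ (k : ℕ) ∧ w d < w i) := by
        ext d
        simp only [Finset.mem_filter, Finset.mem_univ, true_and]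
        constructor
        · rintro ⟨hd1, hd2⟩
          have hd2' : (f d : ℕ) < (f j : ℕ) := by
            rw [← hvapp, ← hvapp]
            exact Fin.lt_def.mp hd2
          obtain ⟨-, -, h3, h4⟩ := (hinv_iff j d hd1).mp hd2'
          exact ⟨hd1, h3, h4⟩
        · rintro ⟨hd1, h3, h4⟩
          refine ⟨hd1, ?_⟩
          have := (hinv_iff j d hd1).mpr ⟨hcj.1, hcj.2, h3, h4⟩
          rw [Fin.lt_def, hvapp, hvapp]
          exact this
      rw [hseteq, hμext]
      by_cases hjk : (j : ℕ) ≤ (k : ℕ)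
      · -- count = x - μ j
        have hsplit := Finset.card_filter_add_card_filter_not
          (s := D.filter (fun e => e ≤ k)) (p := fun d => d < j)
        have e1 : (D.filter (fun e => e ≤ k)).filter (fun d => d < j)
            = D.filter (fun d => d < j) := by
          ext d
          simp only [Finset.mem_filter]
          constructor
          · rintro ⟨⟨hd1, -⟩, h3⟩
            exact ⟨hd1, h3⟩
          · rintro ⟨hd1, h3⟩
            refine ⟨⟨hd1, ?_⟩, h3⟩
            rw [Fin.le_def]
            rw [Fin.lt_def] at h3
            omega
        have e2 : (D.filter (fun e => e ≤ k)).filter (fun d => ¬ d < j)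
            = univ.filter (fun d => j < d ∧ (d : ℕ) ≤ (k : ℕ) ∧ w d < w i) := by
          ext d
          simp only [hD, Finset.mem_filter, Finset.mem_univ, true_and]
          constructor
          · rintro ⟨⟨⟨hd1, hd2⟩, hd3⟩, hd4⟩
            refine ⟨?_, Fin.le_def.mp hd3, hd2⟩
            rcases lt_trichotomy j d with h | h | h
            · exact h
            · exact absurd (h ▸ hd2) hcj.2
            · exact absurd h hd4
          · rintro ⟨hd1, hd2, hd3⟩
            have hij' : i < d := lt_of_le_of_lt (Fin.le_def.mpr hcj.1) hd1
            exact ⟨⟨⟨hij', hd3⟩, Fin.le_def.mpr hd2⟩, fun hc => absurd hd1 (not_lt.mpr hc.le)⟩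
        rw [e1, e2, ← hμapp, hkx'] at hsplit
        have hμj := hF1 j hjk
        omega
      · -- j beyond k : both sides 0
        push_neg at hjk
        have hempty : univ.filter (fun d : Fin n => j < d ∧ (d : ℕ) ≤ (k : ℕ) ∧ w d < w i) = ∅ := by
          apply Finset.filter_false_of_mem
          rintro d - ⟨hd1, hd2, -⟩
          rw [Fin.lt_def] at hd1
          omega
        rw [hempty]
        have := hF3 j hjk
        simp only [Finset.card_empty]
        omega
    · rw [if_neg (fun hc => hcj ⟨hc.1, hwcond.mp hc.2⟩)]
      have hempty : (univ.filter fun d => j < d ∧ v d < v j) = ∅ := by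
        apply Finset.filter_false_of_mem
        rintro d - ⟨hd1, hd2⟩
        have hd2' : (f d : ℕ) < (f j : ℕ) := by
          rw [← hvapp, ← hvapp]
          exact Fin.lt_def.mp hd2
        obtain ⟨hh1, hh2, -, -⟩ := (hinv_iff j d hd1).mp hd2'
        exact hcj ⟨hh1, hh2⟩
      rw [hempty]
      simp

lemma mext_self_zero (w : Equiv.Perm (Fin n)) (i : Fin n) :
    mext w i i.castSucc = 0 := by
  rw [mext_eq]
  rw [Finset.card_eq_zero]
  apply Finset.filter_false_of_mem
  rintro d - ⟨h1, -, h3⟩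
  rw [Fin.lt_def] at h1
  simp only [Fin.coe_castSucc] at h3
  omega

lemma bmin_self (w : Equiv.Perm (Fin n)) (i : Fin n) (x : ℕ) :
    bmin w i x i = x := by
  unfold bmin
  rw [if_pos ⟨le_refl _, le_refl _⟩, mext_self_zero]
  omega

end AuxLemmas

/-- Proposition 4.7: the join-irreducible elements of `(c(Λ_w), ≤)` (nonzero elements `z`
such that `z = x ⊔ y` with `x, y ∈ c(Λ_w)` forces `z = x` or `z = y`) are exactly the
elements of `M_w = {b_{i,x}(w) : i ∈ [n], 1 ≤ x ≤ c_i(w)}`. -/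
theorem joinIrreducibles_eq_Mset {n : ℕ} (w : Equiv.Perm (Fin n)) (z : Fin n → ℕ) :
    (z ∈ codeSet w ∧ z ≠ 0 ∧
      ∀ x ∈ codeSet w, ∀ y ∈ codeSet w, z = x ⊔ y → z = x ∨ z = y) ↔
    z ∈ Mset w := by
  constructor
  · rintro ⟨⟨t, hts, rfl⟩, hz0, hirr⟩
    have ht1 : t ≠ 1 := by
      rintro rfl
      apply hz0
      funext j
      unfold lehmer
      rw [Pi.zero_apply, Finset.card_eq_zero]
      apply Finset.filter_false_of_mem
      intro r hr
      rw [invs_mem] at hr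
      simp only [Equiv.Perm.one_apply] at hr
      intro
      exact absurd hr.2 (not_lt.mpr hr.1.le)
    obtain ⟨u, p, hut, hple, hu⟩ := cover_exists ht1
    have huw : leftWeak u w := fun r hr => hts (hut hr)
    have hplehw : lehmer t p ≤ lehmer w p := lehmer_le hts p
    obtain ⟨v0, hv0w, hv0⟩ := bmin_mem_codeSet w p (le_trans hple (le_refl _)) hplehw
    have hx : bmin w p (lehmer t p) ∈ codeSet w := ⟨v0, hv0w, hv0⟩
    have hy : lehmer u ∈ codeSet w := ⟨u, huw, rfl⟩
    have hble := bmin_le_lehmer hts p (le_refl (lehmer t p))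
    rw [Pi.le_def] at hble
    have hjoin : lehmer t = bmin w p (lehmer t p) ⊔ lehmer u := by
      funext j
      rw [Pi.sup_apply, hu]
      by_cases hj : j = p
      · subst hj
        simp only [if_pos rfl]
        rw [bmin_self]
        exact (sup_eq_left.mpr (Nat.sub_le _ _)).symm
      · simp only [if_neg hj]
        exact (sup_eq_right.mpr (hble j)).symm
    rcases hirr _ hx _ hy hjoin with h | h
    · exact ⟨p, lehmer t p, hple, hplehw, h⟩
    · exfalso
      have hcp := congrFun h p
      rw [hu] at hcp
      simp at hcp
      omega
  · rintro ⟨i, x, hx1, hx2, rfl⟩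
    obtain ⟨v0, hv0w, hv0⟩ := bmin_mem_codeSet w i hx1 hx2
    refine ⟨⟨v0, hv0w, hv0⟩, ?_, ?_⟩
    · intro hc
      have := congrFun hc i
      rw [bmin_self, Pi.zero_apply] at this
      omega
    · rintro a ⟨ta, hta, rfl⟩ b ⟨tb, htb, rfl⟩ heq
      have hi := congrFun heq i
      rw [Pi.sup_apply, bmin_self] at hi
      have hle_a : lehmer ta ≤ bmin w i x := le_of_le_of_eq le_sup_left heq.symm
      have hle_b : lehmer tb ≤ bmin w i x := le_of_le_of_eq le_sup_right heq.symm
      rcases le_total (lehmer tb i) (lehmer ta i) with h | h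
      · left
        have hxa : x ≤ lehmer ta i := le_of_eq (hi.trans (sup_eq_left.mpr h))
        exact le_antisymm (bmin_le_lehmer hta i hxa) hle_a
      · right
        have hxb : x ≤ lehmer tb i := le_of_eq (hi.trans (sup_eq_right.mpr h))
        exact le_antisymm (bmin_le_lehmer htb i hxb) hle_b
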